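/- For every ε > 0 there exists δ > 0 such that for every σ ∈ (2, 2+δ) the following holds: if a solution (X,Y,Z) of the system (S) (with parameters corresponding to σ) satisfies Z > 0 on its domain, (X,Y,Z)(η) → P2 as η → −∞, and (X,Y,Z)(η) → P0^λ as η → +∞ for some λ ∈ [−β/(2α), 0), then λ > −ε. Equivalently, with λ(σ) denoting the parabola parameter of the ω-limit of the orbit going out of P2, one has liminf_{σ→2⁺} λ(σ) = 0. -/

import Mathlib

open Real Set Filter Topology

/-- If `f` has derivative `F` everywhere and `F ≤ K` on `[a,b]`, then
`f b ≤ f a + K * (b - a)`. -/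
lemma decay_bound (f F : ℝ → ℝ) (hf : ∀ t, HasDerivAt f (F t) t) {a b K : ℝ}
    (hab : a ≤ b) (hK : ∀ t ∈ Set.Icc a b, F t ≤ K) : f b ≤ f a + K * (b - a) := by
  have hd : ∀ t, HasDerivAt (fun t => f t - K * t) (F t - K) t := by
    intro t
    have h : HasDerivAt (fun t => f t - K * t) (F t - K * 1) t :=
      (hf t).sub ((hasDerivAt_id t).const_mul K)
    simpa using h
  have hmono : AntitoneOn (fun t => f t - K * t) (Set.Icc a b) := by
    apply antitoneOn_of_deriv_nonpos (convex_Icc a b)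
    · exact Continuous.continuousOn (by
        have : Continuous f := by
          rw [continuous_iff_continuousAt]; exact fun t => (hf t).continuousAt
        fun_prop)
    · intro t _
      exact (hd t).differentiableAt.differentiableWithinAt
    · intro t ht
      rw [interior_Icc] at ht
      rw [(hd t).deriv]
      have := hK t ⟨ht.1.le, ht.2.le⟩
      linarith
  have := hmono (Set.left_mem_Icc.2 hab) (Set.right_mem_Icc.2 hab) hab
  simp only at this
  nlinarith [this]

/-- Barrier lemma: a function with everywhere derivative which is strictly negative
whenever the function vanishes, cannot cross `0` upwards. -/
lemma barrier_le (g G : ℝ → ℝ) (hg : ∀ t, HasDerivAt g (G t) t) {t₀ : ℝ}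
    (h0 : g t₀ ≤ 0) (hG : ∀ t, t₀ ≤ t → g t = 0 → G t < 0) :
    ∀ t, t₀ ≤ t → g t ≤ 0 := by
  intro t₂ ht₂
  by_contra hpos
  push_neg at hpos
  have hgc : Continuous g := by
    rw [continuous_iff_continuousAt]; exact fun t => (hg t).continuousAt
  have ht₀t₂ : t₀ < t₂ := by
    rcases eq_or_lt_of_le ht₂ with h | h
    · exact absurd (h ▸ h0) (not_le.2 hpos)
    · exact h
  set A : Set ℝ := {t ∈ Set.Icc t₀ t₂ | g t ≤ 0} with hA
  have hAne : A.Nonempty := ⟨t₀, ⟨le_refl _, ht₀t₂.le⟩, h0⟩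
  have hAbdd : BddAbove A := ⟨t₂, fun x hx => hx.1.2⟩
  have hAclosed : IsClosed A :=
    (isClosed_Icc.inter (isClosed_le hgc continuous_const) : IsClosed _)
  set w := sSup A with hw
  have hwA : w ∈ A := hAclosed.csSup_mem hAne hAbdd
  have hww : g w ≤ 0 := hwA.2
  have hwt₂ : w < t₂ := by
    rcases eq_or_lt_of_le hwA.1.2 with h | h
    · exact absurd (h ▸ hww) (not_le.2 hpos)
    · exact h
  have hgt : ∀ t, w < t → t ≤ t₂ → 0 < g t := by
    intro t hwt htt₂
    by_contra hle
    push_neg at hle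
    have : t ∈ A := ⟨⟨hwA.1.1.trans hwt.le, htt₂⟩, hle⟩
    exact absurd (le_csSup hAbdd this) (not_le.2 hwt)
  have hgw0 : g w = 0 := by
    refine le_antisymm hww ?_
    have htend : Tendsto g (𝓝[>] w) (𝓝 (g w)) :=
      (hgc.continuousAt).continuousWithinAt.tendsto
    refine ge_of_tendsto htend ?_
    filter_upwards [Ioc_mem_nhdsGT_of_mem ⟨le_refl w, hwt₂⟩] with t ht
    exact (hgt t ht.1 ht.2).le
  have hGw : G w < 0 := hG w hwA.1.1 hgw0
  have hslope : Tendsto (slope g w) (𝓝[≠] w) (𝓝 (G w)) :=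
    hasDerivAt_iff_tendsto_slope.1 (hg w)
  have hslope' : Tendsto (slope g w) (𝓝[>] w) (𝓝 (G w)) :=
    hslope.mono_left (nhdsWithin_mono w fun x hx => ne_of_gt hx)
  have hev : ∀ᶠ t in 𝓝[>] w, slope g w t < 0 := hslope'.eventually_lt_const hGw
  have hev2 : ∀ᶠ t in 𝓝[>] w, t ∈ Set.Ioc w t₂ := Ioc_mem_nhdsGT_of_mem ⟨le_refl w, hwt₂⟩
  obtain ⟨t, hts, htm⟩ := (hev.and hev2).exists
  have hsl : slope g w t = (g t - g w) / (t - w) := by rw [slope_def_field]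
  rw [hsl, hgw0, sub_zero] at hts
  have h1 : 0 < t - w := sub_pos.2 htm.1
  have hgtneg : g t < 0 := by
    rcases div_neg_iff.1 hts with h | h
    · exact absurd h.2 (not_lt.2 h1.le)
    · exact h.1
  exact absurd (hgt t htm.1 htm.2) (not_lt.2 hgtneg.le)

/-- Dichotomy: a differentiable function with limits at both infinities either is bounded
by the max of the limits, or attains a global max at a critical point above that max. -/
lemma global_max_dichotomy (f F : ℝ → ℝ) (hf : ∀ t, HasDerivAt f (F t) t)
    {L1 L2 : ℝ} (h1 : Tendsto f atBot (𝓝 L1)) (h2 : Tendsto f atTop (𝓝 L2)) :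
    (∀ t, f t ≤ max L1 L2) ∨ ∃ p, (∀ t, f t ≤ f p) ∧ F p = 0 ∧ max L1 L2 < f p := by
  by_cases h : ∀ t, f t ≤ max L1 L2
  · exact Or.inl h
  right
  push_neg at h
  obtain ⟨η₁, hη₁⟩ := h
  have hfc : Continuous f := by
    rw [continuous_iff_continuousAt]; exact fun t => (hf t).continuousAt
  have hbot : ∀ᶠ t in atBot, f t < f η₁ :=
    h1.eventually_lt_const (lt_of_le_of_lt (le_max_left _ _) hη₁)
  have htop : ∀ᶠ t in atTop, f t < f η₁ :=
    h2.eventually_lt_const (lt_of_le_of_lt (le_max_right _ _) hη₁)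
  obtain ⟨a, ha⟩ := eventually_atBot.1 hbot
  obtain ⟨b, hb⟩ := eventually_atTop.1 htop
  have haη : a < η₁ := by
    by_contra h'
    push_neg at h'
    exact absurd (ha η₁ h') (lt_irrefl _)
  have hηb : η₁ < b := by
    by_contra h'
    push_neg at h'
    exact absurd (hb η₁ h') (lt_irrefl _)
  have hab : a ≤ b := haη.le.trans hηb.le
  obtain ⟨p, hpmem, hpmax⟩ :=
    isCompact_Icc.exists_isMaxOn (Set.nonempty_Icc.2 hab) hfc.continuousOn
  have hp1 : f η₁ ≤ f p := hpmax ⟨haη.le, hηb.le⟩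
  have hglobal : ∀ t, f t ≤ f p := by
    intro t
    rcases le_or_gt t a with h' | h'
    · exact (ha t h').le.trans hp1
    rcases le_or_gt b t with h'' | h''
    · exact (hb t h'').le.trans hp1
    · exact hpmax ⟨h'.le, h''.le⟩
  have hpa : a < p := by
    rcases eq_or_lt_of_le hpmem.1 with h | h
    · exfalso; have h2 := ha a le_rfl; rw [h] at h2; linarith
    · exact h
  have hpb : p < b := by
    rcases eq_or_lt_of_le hpmem.2 with h | h
    · exfalso; have h2 := hb b le_rfl; rw [← h] at h2; linarith
    · exact h
  have hlocal : IsLocalMax f p := hpmax.isLocalMax (Icc_mem_nhds hpa hpb)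
  exact ⟨p, hglobal, hlocal.hasDerivAt_eq_zero (hf p), lt_of_lt_of_le hη₁ hp1⟩

/-- Solutions of a scalar linear ODE `X' = X g` are given by an exponential formula. -/
lemma ode_exp_formula (X g : ℝ → ℝ) (hgc : Continuous g)
    (hX : ∀ t, HasDerivAt X (X t * g t) t) :
    ∀ t, X t = X 0 * Real.exp (∫ s in (0:ℝ)..t, g s) := by
  set G := fun t => ∫ s in (0:ℝ)..t, g s with hGdef
  have hG : ∀ t, HasDerivAt G (g t) t := fun t =>
    intervalIntegral.integral_hasDerivAt_right (hgc.intervalIntegrable _ _)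
      (hgc.stronglyMeasurableAtFilter _ _) hgc.continuousAt
  have hh : ∀ t, HasDerivAt (fun u => X u * Real.exp (-G u)) 0 t := by
    intro t
    have h1 : HasDerivAt (fun u => Real.exp (-G u)) (Real.exp (-G t) * -(g t)) t :=
      ((hG t).neg).exp
    have h2 : HasDerivAt (fun u => X u * Real.exp (-G u)) _ t := (hX t).mul h1
    convert h2 using 1
    ring
  have hconst : ∀ s t : ℝ, X s * Real.exp (-G s) = X t * Real.exp (-G t) := by
    have hdiff : Differentiable ℝ (fun u => X u * Real.exp (-G u)) :=
      fun t => (hh t).differentiableAt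
    intro s t
    exact is_const_of_deriv_eq_zero hdiff (fun x => (hh x).deriv) s t
  intro t
  have h0 : G 0 = 0 := intervalIntegral.integral_same
  have := hconst t 0
  rw [h0] at this
  simp only [neg_zero, Real.exp_zero, mul_one] at this
  have hexp : Real.exp (-G t) * Real.exp (G t) = 1 := by
    rw [← Real.exp_add]; simp
  calc X t = X t * Real.exp (-G t) * Real.exp (G t) := by rw [mul_assoc, hexp, mul_one]
    _ = X 0 * Real.exp (G t) := by rw [this]


section NumericHelpers

variable {m σ α c : ℝ}

lemma num_base (hm1 : 1 < m) (hm2 : m < 2) (hσ2 : 2 < σ) (hαpos : 0 < α)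
    (hA : (σ - 2) * (m - 1) * α = σ + 2) : σ + 2 ≤ (σ - 2) * α := by
  nlinarith [mul_pos (show (0:ℝ) < σ - 2 by linarith) hαpos,
    mul_nonneg (mul_pos (show (0:ℝ) < σ - 2 by linarith) hαpos).le
      (show (0:ℝ) ≤ 2 - m by linarith)]

lemma num_y2 (hm1 : 1 < m) (hm2 : m < 2) (hσ2 : 2 < σ) (hαpos : 0 < α)
    (hA : (σ - 2) * (m - 1) * α = σ + 2) : 1 / ((m + 1) * α) ≤ (σ - 2) / 8 := by
  have hk := num_base hm1 hm2 hσ2 hαpos hA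
  rw [div_le_div_iff₀ (by positivity) (by norm_num)]
  nlinarith [mul_nonneg (show (0:ℝ) ≤ m - 1 by linarith)
    (show (0:ℝ) ≤ (σ - 2) * α - (σ + 2) by linarith)]

lemma num_x2 (hm1 : 1 < m) (hm2 : m < 2) (hσ2 : 2 < σ) (hαpos : 0 < α)
    (hA : (σ - 2) * (m - 1) * α = σ + 2) :
    (m - 1) / (2 * (m + 1) * α) ≤ (σ - 2) / 16 := by
  have hk := num_base hm1 hm2 hσ2 hαpos hA
  rw [div_le_div_iff₀ (by positivity) (by norm_num)]
  nlinarith [mul_nonneg (show (0:ℝ) ≤ m - 1 by linarith)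
    (show (0:ℝ) ≤ (σ - 2) * α - (σ + 2) by linarith)]

lemma num_x2c (hm1 : 1 < m) (hm2 : m < 2) (hσ2 : 2 < σ) (hαpos : 0 < α)
    (hA : (σ - 2) * (m - 1) * α = σ + 2) (hcpos : 0 < c)
    (hcmul : c * (σ + 2) = 2 * (m - 1)) :
    (m - 1) / (2 * (m + 1) * α) ≤ (σ - 2) / 8 * c := by
  have hk := num_base hm1 hm2 hσ2 hαpos hA
  rw [div_le_iff₀ (by positivity)]
  nlinarith [mul_nonneg hcpos.le
    (show (0:ℝ) ≤ (σ - 2) * α - (σ + 2) by linarith), hcmul,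
    mul_pos hcpos (show (0:ℝ) < σ + 2 by linarith)]

lemma num_case4 (hm1 : 1 < m) (hm2 : m < 2) (hσ2 : 2 < σ) (hσ3 : σ < 3)
    (hcmul : c * (σ + 2) = 2 * (m - 1)) (hcpos : 0 < c) {Yp : ℝ}
    (h2 : Yp + c < (m - 1) / 2) : Yp ≤ (σ - 2) / 8 := by
  nlinarith [hcmul, mul_pos hcpos (show (0:ℝ) < σ + 2 by linarith)]

lemma fy_est {σ e c Yt Xt Zt : ℝ} (hσ2 : 2 < σ) (he : 0 < e) (he4 : e ≤ 1/4)
    (hc : 0 < c) (h4ec : σ - 2 ≤ 4 * (e * c)) (hYt : -e ≤ Yt) (hX0 : 0 < Xt)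
    (hXB : Xt ≤ (σ - 2) / 16) (hZt : 2 * e * c ≤ Zt) :
    -Yt ^ 2 - c * Yt + Xt - Xt * Yt - Zt ≤ -(e * c / 2) := by
  have h1 : -Yt * (Yt + c) ≤ e * c := by
    nlinarith [sq_nonneg Yt, mul_nonneg hc.le (by linarith : (0:ℝ) ≤ Yt + e)]
  have h2 : Xt * (1 - Yt) ≤ 2 * ((σ - 2) / 16) := by
    nlinarith [mul_nonneg (sub_nonneg.2 hXB) (by linarith : (0:ℝ) ≤ 1 + e),
      mul_nonneg hX0.le (by linarith : (0:ℝ) ≤ Yt + e)]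
  nlinarith [h1, h2]

lemma crit_max (Yp Xp Zp c : ℝ)
    (h : -Yp ^ 2 - c * Yp + Xp - Xp * Yp - Zp = 0)
    (hZ : 0 < Zp) (hX : 0 < Xp) (hY : 0 < Yp) : Yp * (Yp + c) < Xp := by
  nlinarith [mul_pos hX hY]

lemma num_c4 (hm1 : 1 < m) (hσ2 : 2 < σ) (hσ3 : σ < 3)
    (hcmul : c * (σ + 2) = 2 * (m - 1)) : m - 1 < 4 * c := by
  nlinarith

lemma num_B3 (hm1 : 1 < m) (hm2 : m < 2) (hσ2 : 2 < σ) {e : ℝ} (he : 0 < e)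
    (he4 : e ≤ 1 / 4) (hσe : σ - 2 ≤ e * (m - 1)) :
    (σ - 2) * ((σ - 2) / 16) ≤ (m - 1) * e := by
  have hem : e * (m - 1) ≤ 1 := by nlinarith
  nlinarith

lemma exp_two_le_nine : Real.exp 2 ≤ 9 := by
  have h := Real.exp_one_lt_d9
  have h2 : Real.exp 2 = Real.exp 1 * Real.exp 1 := by
    rw [← Real.exp_add]; norm_num
  rw [h2]
  nlinarith [Real.exp_pos 1]

lemma num_final {l c e z₀ : ℝ} (hz : z₀ = -l ^ 2 - c * l) (hzb : z₀ ≤ 18 * (e * c))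
    (hp1 : 0 ≤ -l * (l + c / 2)) (hp2 : 0 < (-l - 36 * e) * c) : False := by
  nlinarith

end NumericHelpers

/-- The self-similar exponent `α = (σ+2)/((σ-2)(m-1))`. -/
noncomputable def ssAlpha (m σ : ℝ) : ℝ := (σ + 2) / ((σ - 2) * (m - 1))

/-- The self-similar exponent `β = 2/(σ-2)`. -/
noncomputable def ssBeta (σ : ℝ) : ℝ := 2 / (σ - 2)

/-- `(X,Y,Z)` satisfies the quadratic system (S) at time `η`:
`X' = X((m−1)Y − 2X)`, `Y' = −Y² − (β/α)Y + X − XY − Z`, `Z' = (σ−2)XZ`. -/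
def SysAt (m σ : ℝ) (X Y Z : ℝ → ℝ) (η : ℝ) : Prop :=
  HasDerivAt X (X η * ((m - 1) * Y η - 2 * X η)) η ∧
  HasDerivAt Y (-(Y η) ^ 2 - ssBeta σ / ssAlpha m σ * Y η + X η - X η * Y η - Z η) η ∧
  HasDerivAt Z ((σ - 2) * X η * Z η) η

/-- The equilibrium `P0^λ = (0, λ, −λ² − (β/α)λ)` on the critical parabola. -/
noncomputable def P0pt (m σ l : ℝ) : ℝ × ℝ × ℝ :=
  (0, l, -l ^ 2 - ssBeta σ / ssAlpha m σ * l)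

/-- The equilibrium `P2 = ((m−1)/(2(m+1)α), 1/((m+1)α), 0)`. -/
noncomputable def P2pt (m σ : ℝ) : ℝ × ℝ × ℝ :=
  ((m - 1) / (2 * (m + 1) * ssAlpha m σ), 1 / ((m + 1) * ssAlpha m σ), 0)

set_option maxHeartbeats 1000000 in
/-- `liminf_{σ→2⁺} λ(σ) = 0`: for every `ε > 0` there is `δ > 0` such
that for `σ ∈ (2, 2+δ)`, any globally defined orbit of (S) with `Z > 0`, emanating
from `P2` at `−∞` and converging to `P0^λ` with `λ ∈ [−β/(2α), 0)` at `+∞`,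
satisfies `λ > −ε`. -/
theorem liminf_lambda_of_sigma_is_zero
    (m : ℝ) (hm1 : 1 < m) (hm2 : m < 2) :
    ∀ ε : ℝ, 0 < ε → ∃ δ : ℝ, 0 < δ ∧ ∀ σ : ℝ, 2 < σ → σ < 2 + δ →
      ∀ (X Y Z : ℝ → ℝ) (l : ℝ),
        (∀ η : ℝ, SysAt m σ X Y Z η) →
        (∀ η : ℝ, 0 < Z η) →
        Tendsto (fun η => (X η, Y η, Z η)) atBot (𝓝 (P2pt m σ)) →
        l ∈ Ico (-(ssBeta σ / (2 * ssAlpha m σ))) (0 : ℝ) →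
        Tendsto (fun η => (X η, Y η, Z η)) atTop (𝓝 (P0pt m σ l)) →
        -ε < l := by
  intro ε hε
  have hm1' : (0:ℝ) < m - 1 := by linarith
  set e : ℝ := min (ε / 37) (1 / 4) with he_def
  have he_pos : 0 < e := lt_min (by positivity) (by norm_num)
  have he37 : e ≤ ε / 37 := min_le_left _ _
  have he4 : e ≤ 1 / 4 := min_le_right _ _
  refine ⟨min 1 (e * (m - 1)), lt_min one_pos (by positivity), ?_⟩
  intro σ hσ2 hσδ X Y Z l hS hZpos hBot hlmem hTop
  have hσ3 : σ < 3 := lt_of_lt_of_le hσδ (by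
    have := min_le_left 1 (e * (m - 1)); linarith)
  have hσe : σ - 2 ≤ e * (m - 1) := by
    have := min_le_right 1 (e * (m - 1)); linarith
  have hσ2' : (0:ℝ) < σ - 2 := by linarith
  -- basic constants
  set α : ℝ := ssAlpha m σ with hα_def
  set c : ℝ := ssBeta σ / ssAlpha m σ with hc_def
  have hαval : α = (σ + 2) / ((σ - 2) * (m - 1)) := rfl
  have hαpos : 0 < α := by rw [hαval]; positivity
  have hAval : (σ - 2) * (m - 1) * α = σ + 2 := by
    rw [hαval]; field_simp
  have hne1 : σ - 2 ≠ 0 := ne_of_gt hσ2'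
  have hne2 : m - 1 ≠ 0 := ne_of_gt hm1'
  have hne3 : σ + 2 ≠ 0 := by positivity
  have hc : c = 2 * (m - 1) / (σ + 2) := by
    rw [hc_def]
    show (2 / (σ - 2)) / ((σ + 2) / ((σ - 2) * (m - 1))) = 2 * (m - 1) / (σ + 2)
    field_simp
  have hcpos : 0 < c := by rw [hc]; positivity
  have hclb : 2 * (m - 1) / 5 ≤ c := by
    rw [hc]
    apply div_le_div_of_nonneg_left (by linarith) (by linarith) (by linarith)
  have hcub : c ≤ (m - 1) / 2 := by
    rw [hc, div_le_div_iff₀ (by linarith) (by norm_num)]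
    nlinarith
  -- components of the limits
  set x₂ : ℝ := (m - 1) / (2 * (m + 1) * α) with hx₂def
  set y₂ : ℝ := 1 / ((m + 1) * α) with hy₂def
  have hx₂pos : 0 < x₂ := by rw [hx₂def]; positivity
  have hy₂pos : 0 < y₂ := by rw [hy₂def]; positivity
  set z₀ : ℝ := -l ^ 2 - c * l with hz₀def
  have hXbot : Tendsto X atBot (𝓝 x₂) := by
    exact (continuous_fst.tendsto (P2pt m σ)).comp hBot
  have hYbot : Tendsto Y atBot (𝓝 y₂) := by
    exact ((continuous_fst.comp continuous_snd).tendsto (P2pt m σ)).comp hBot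
  have hZbot : Tendsto Z atBot (𝓝 0) := by
    exact ((continuous_snd.comp continuous_snd).tendsto (P2pt m σ)).comp hBot
  have hXtop : Tendsto X atTop (𝓝 0) := by
    exact (continuous_fst.tendsto (P0pt m σ l)).comp hTop
  have hYtop : Tendsto Y atTop (𝓝 l) := by
    exact ((continuous_fst.comp continuous_snd).tendsto (P0pt m σ l)).comp hTop
  have hZtop : Tendsto Z atTop (𝓝 z₀) := by
    exact ((continuous_snd.comp continuous_snd).tendsto (P0pt m σ l)).comp hTop
  -- facts about l
  have hl0 : l < 0 := hlmem.2
  have hlhalf : -(c / 2) ≤ l := by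
    have h := hlmem.1
    have : ssBeta σ / (2 * ssAlpha m σ) = c / 2 := by
      show ssBeta σ / (2 * α) = (ssBeta σ / ssAlpha m σ) / 2
      rw [div_div, ← hα_def, mul_comm]
    rw [this] at h
    exact h
  -- derivatives
  have hdX : ∀ t, HasDerivAt X (X t * ((m - 1) * Y t - 2 * X t)) t := fun t => (hS t).1
  have hdY : ∀ t, HasDerivAt Y (-(Y t) ^ 2 - c * Y t + X t - X t * Y t - Z t) t :=
    fun t => (hS t).2.1
  have hdZ : ∀ t, HasDerivAt Z ((σ - 2) * X t * Z t) t := fun t => (hS t).2.2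
  clear_value α c x₂ y₂ z₀ e
  clear hS hBot hTop hlmem
  have hXc : Continuous X := continuous_iff_continuousAt.2 fun t => (hdX t).continuousAt
  have hYc : Continuous Y := continuous_iff_continuousAt.2 fun t => (hdY t).continuousAt
  have hZc : Continuous Z := continuous_iff_continuousAt.2 fun t => (hdZ t).continuousAt
  -- X is positive everywhere
  have hXpos : ∀ t, 0 < X t := by
    have hgc : Continuous fun t => (m - 1) * Y t - 2 * X t := by fun_prop
    have hXform := ode_exp_formula X (fun t => (m - 1) * Y t - 2 * X t) hgc hdX
    rcases le_or_gt (X 0) 0 with h0 | h0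
    · exfalso
      have hle : ∀ t, X t ≤ 0 := by
        intro t
        rw [hXform t]
        have := Real.exp_pos (∫ s in (0:ℝ)..t, ((m - 1) * Y s - 2 * X s))
        nlinarith
      have : x₂ ≤ 0 := le_of_tendsto hXbot (Eventually.of_forall hle)
      linarith [hx₂pos]
    · intro t
      rw [hXform t]
      positivity
  -- Z is strictly increasing, bounded above by z₀
  have hZmono : StrictMono Z := by
    apply strictMono_of_deriv_pos
    intro t
    rw [(hdZ t).deriv]
    exact mul_pos (mul_pos hσ2' (hXpos t)) (hZpos t)
  have hZle : ∀ t, Z t ≤ z₀ := fun t => hZmono.monotone.ge_of_tendsto hZtop t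
  -- key algebraic inequality
  have hkeyα : σ + 2 ≤ (σ - 2) * α := num_base hm1 hm2 hσ2 hαpos hAval
  have hcmul : c * (σ + 2) = 2 * (m - 1) := by
    rw [hc]; field_simp
  have hy₂b : y₂ ≤ (σ - 2) / 8 := hy₂def ▸ num_y2 hm1 hm2 hσ2 hαpos hAval
  have hx₂b : x₂ ≤ (σ - 2) / 16 := hx₂def ▸ num_x2 hm1 hm2 hσ2 hαpos hAval
  -- global upper bounds on Y and X
  have hmax : (∀ t, Y t ≤ (σ - 2) / 8) ∧ (∀ t, X t ≤ (σ - 2) / 16) := by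
    have DY := global_max_dichotomy Y _ hdY hYbot hYtop
    have DX := global_max_dichotomy X _ hdX hXbot hXtop
    rw [max_eq_left (le_of_lt (hl0.trans hy₂pos))] at DY
    rw [max_eq_left hx₂pos.le] at DX
    have hXfacts : (∀ t, X t ≤ x₂) ∨ ∃ q, (∀ t, X t ≤ X q) ∧ X q = (m - 1) * Y q / 2 := by
      rcases DX with hXA | ⟨q, hqm, hqF, hqgt⟩
      · exact Or.inl hXA
      · right
        have hXqpos : 0 < X q := hx₂pos.trans hqgt
        refine ⟨q, hqm, ?_⟩
        rcases mul_eq_zero.1 hqF with h | h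
        · exact absurd h (ne_of_gt hXqpos)
        · linarith
    rcases DY with hYA | ⟨p, hpm, hpF, hpgt⟩
    · have hYB : ∀ t, Y t ≤ (σ - 2) / 8 := fun t => (hYA t).trans hy₂b
      refine ⟨hYB, ?_⟩
      rcases hXfacts with hXA | ⟨q, hqm, hq⟩
      · exact fun t => (hXA t).trans hx₂b
      · intro t
        refine (hqm t).trans ?_
        rw [hq]
        nlinarith [hYB q, hm1', hσ2']
    · -- Y attains an interior max at p
      have hYppos : 0 < Y p := hy₂pos.trans hpgt
      have hZp := hZpos p
      have hXp := hXpos p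
      have hkeyp : Y p * (Y p + c) < X p := crit_max _ _ _ _ hpF hZp hXp hYppos
      have hYpb : Y p ≤ (σ - 2) / 8 := by
        rcases hXfacts with hXA | ⟨q, hqm, hq⟩
        · -- Y p * c < x₂ and x₂ ≤ (σ-2)/8 * c
          have h1 : Y p * c < x₂ := by nlinarith [hXA p, hcpos, hYppos]
          have h2 : x₂ ≤ (σ - 2) / 8 * c :=
            hx₂def ▸ num_x2c hm1 hm2 hσ2 hαpos hAval hcpos hcmul
          have := h1.trans_le h2
          exact le_of_lt ((mul_lt_mul_iff_left₀ hcpos).1 this)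
        · have h1 : X p ≤ (m - 1) * Y p / 2 := by
            refine (hqm p).trans ?_
            rw [hq]
            nlinarith [hpm q, hm1']
          have h2 : Y p + c < (m - 1) / 2 := by
            have h3 : Y p * (Y p + c) < Y p * ((m - 1) / 2) := by nlinarith [hkeyp, h1]
            exact (mul_lt_mul_iff_right₀ hYppos).1 h3
          exact num_case4 hm1 hm2 hσ2 hσ3 hcmul hcpos h2
      have hYB : ∀ t, Y t ≤ (σ - 2) / 8 := fun t => (hpm t).trans hYpb
      refine ⟨hYB, ?_⟩
      rcases hXfacts with hXA | ⟨q, hqm, hq⟩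
      · exact fun t => (hXA t).trans hx₂b
      · intro t
        refine (hqm t).trans ?_
        rw [hq]
        nlinarith [hYB q, hm1', hσ2']
  obtain ⟨hYB, hXB⟩ := hmax
  -- log-derivatives
  have hlnZ : ∀ t, HasDerivAt (fun u => Real.log (Z u)) ((σ - 2) * X t) t := by
    intro t
    have h := (hdZ t).log (hZpos t).ne'
    rwa [show (σ - 2) * X t * Z t / Z t = (σ - 2) * X t from by
      rw [mul_div_assoc, div_self (hZpos t).ne', mul_one]] at h
  have hlnX : ∀ t, HasDerivAt (fun u => Real.log (X u)) ((m - 1) * Y t - 2 * X t) t := by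
    intro t
    have h := (hdX t).log (hXpos t).ne'
    rwa [show X t * ((m - 1) * Y t - 2 * X t) / X t = (m - 1) * Y t - 2 * X t from by
      rw [mul_comm, mul_div_assoc, div_self (hXpos t).ne', mul_one]] at h
  have hσ1 : σ - 2 ≤ 1 := by linarith
  have hecpos : (0:ℝ) < e * c := mul_pos he_pos hcpos
  have h2ec : (0:ℝ) < 2 * e * c := by positivity
  have hc4 : m - 1 < 4 * c := num_c4 hm1 hσ2 hσ3 hcmul
  have h4ec : σ - 2 ≤ 4 * (e * c) := by
    have h := mul_le_mul_of_nonneg_left hc4.le he_pos.le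
    nlinarith [h]
  -- MAIN CLAIM : z₀ ≤ 18 e c
  have hzmain : z₀ ≤ 18 * (e * c) := by
    by_cases hcase : ∀ t, Z t < 2 * e * c
    · have h := le_of_tendsto hZtop (Eventually.of_forall fun t => (hcase t).le)
      linarith [hecpos]
    · push_neg at hcase
      obtain ⟨w, hw⟩ := hcase
      have hev : ∀ᶠ t in atBot, Z t < 2 * e * c := hZbot.eventually_lt_const h2ec
      obtain ⟨a, ha⟩ := eventually_atBot.1 hev
      have haw : a < w := by
        by_contra h'
        push_neg at h'
        exact absurd hw (not_le.2 (ha w h'))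
      obtain ⟨S, hSmem, hSval⟩ : ∃ S ∈ Set.Icc a w, Z S = 2 * e * c := by
        have h := intermediate_value_Icc haw.le hZc.continuousOn
        exact h ⟨(ha a le_rfl).le, hw⟩
      have hZgeS : ∀ t, S ≤ t → 2 * e * c ≤ Z t := fun t ht =>
        hSval ▸ hZmono.monotone ht
      -- derivative estimate while Y ≥ -e, after S
      have hFYle : ∀ t, S ≤ t → -e ≤ Y t →
          -(Y t) ^ 2 - c * Y t + X t - X t * Y t - Z t ≤ -(e * c / 2) := by
        intro t ht hYt
        exact fy_est hσ2 he_pos he4 hcpos h4ec hYt (hXpos t) (hXB t) (hZgeS t ht)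
      set Δ : ℝ := 1 / (e * c) with hΔdef
      have hΔpos : 0 < Δ := by positivity
      -- plummet below -e within time Δ
      obtain ⟨η₀, hη₀mem, hη₀⟩ : ∃ t ∈ Set.Icc S (S + Δ), Y t ≤ -e := by
        by_contra hcon
        push_neg at hcon
        have hYd : Y (S + Δ) ≤ Y S + -(e * c / 2) * (S + Δ - S) :=
          decay_bound Y _ hdY (le_of_lt (lt_add_of_pos_right S hΔpos))
            (fun t htm => hFYle t htm.1 (hcon t htm).le)
        have hYS := hYB S
        have hend := hcon (S + Δ) ⟨by linarith, le_rfl⟩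
        have hSS : S + Δ - S = Δ := by ring
        have hhalf : -(e * c / 2) * (S + Δ - S) = -(1/2) := by
          rw [hSS, hΔdef]
          field_simp
        rw [hhalf] at hYd
        linarith
      -- Y stays below -e after η₀
      have hbar : ∀ t, η₀ ≤ t → Y t ≤ -e := by
        have h0' : Y η₀ + e ≤ 0 := by linarith
        have hG' : ∀ t, η₀ ≤ t → Y t + e = 0 →
            -(Y t) ^ 2 - c * Y t + X t - X t * Y t - Z t < 0 := by
          intro t ht h0
          refine lt_of_le_of_lt (hFYle t (hη₀mem.1.trans ht) (by linarith)) ?_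
          have : 0 < e * c / 2 := by positivity
          linarith
        have hb := barrier_le (fun t => Y t + e) _
          (fun t => (hdY t).add_const e) (t₀ := η₀) h0' hG'
        intro t ht
        have h2 : Y t + e ≤ 0 := hb t ht
        linarith
      -- growth of log Z on [S, η₀]
      have hZη₀ : Real.log (Z η₀) ≤ Real.log (2 * e * c) + 1 := by
        have hd : Real.log (Z η₀) ≤
            Real.log (Z S) + (σ - 2) * ((σ - 2) / 16) * (η₀ - S) :=
          decay_bound (fun u => Real.log (Z u)) _ hlnZ hη₀mem.1
            (fun t _ => mul_le_mul_of_nonneg_left (hXB t) hσ2'.le)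
        rw [hSval] at hd
        have h5 : η₀ - S ≤ Δ := by linarith [hη₀mem.2]
        have h5' : 0 ≤ η₀ - S := by linarith [hη₀mem.1]
        have t1 : (σ - 2) * (σ - 2) ≤ 4 * (e * c) := by
          have h := mul_le_mul hσ1 h4ec hσ2'.le one_pos.le
          linarith [h]
        have t3 : (σ - 2) * (σ - 2) * (η₀ - S) ≤ 4 * (e * c) * Δ :=
          mul_le_mul t1 h5 h5' (by positivity)
        have t4 : 4 * (e * c) * Δ = 4 := by
          rw [hΔdef]
          field_simp
        linarith [hd, t3, t4]
      -- decay of X after η₀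
      have hXexp : ∀ t, η₀ ≤ t →
          X t ≤ (σ - 2) / 16 * Real.exp (-((m - 1) * e) * (t - η₀)) := by
        intro t ht
        have h8 : Real.log (X t) ≤ Real.log (X η₀) + -((m - 1) * e) * (t - η₀) :=
          decay_bound (fun u => Real.log (X u)) _ hlnX ht
            (fun s hs => by
            have ha1 : (m - 1) * Y s ≤ (m - 1) * (-e) :=
              mul_le_mul_of_nonneg_left (hbar s hs.1) hm1'.le
            have ha2 := hXpos s
            have ha3 : (m - 1) * -e = -((m - 1) * e) := by ring
            linarith [ha1, ha2])
        calc X t = Real.exp (Real.log (X t)) := (Real.exp_log (hXpos t)).symm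
          _ ≤ Real.exp (Real.log (X η₀) + -((m - 1) * e) * (t - η₀)) :=
            Real.exp_le_exp.2 h8
          _ = X η₀ * Real.exp (-((m - 1) * e) * (t - η₀)) := by
            rw [Real.exp_add, Real.exp_log (hXpos η₀)]
          _ ≤ (σ - 2) / 16 * Real.exp (-((m - 1) * e) * (t - η₀)) :=
            mul_le_mul_of_nonneg_right (hXB η₀) (Real.exp_pos _).le
      -- bounded growth of log Z after η₀
      set k : ℝ := (m - 1) * e with hkdef
      have hkpos : 0 < k := mul_pos hm1' he_pos
      set B3 : ℝ := (σ - 2) * ((σ - 2) / 16) / k with hB3def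
      have hB3nn : 0 ≤ B3 := by positivity
      have hB3k : B3 * k = (σ - 2) * ((σ - 2) / 16) := by
        rw [hB3def, div_mul_cancel₀ _ hkpos.ne']
      have hW : ∀ T, η₀ ≤ T → Real.log (Z T) ≤ Real.log (Z η₀) + B3 := by
        intro T hT
        have hdW : ∀ t, HasDerivAt
            (fun u => Real.log (Z u) + B3 * Real.exp (-k * (u - η₀)))
            ((σ - 2) * X t + B3 * (Real.exp (-k * (t - η₀)) * -k)) t := by
          intro t
          refine (hlnZ t).add (HasDerivAt.const_mul _ ?_)
          have h9 : HasDerivAt (fun u : ℝ => -k * (u - η₀)) (-k) t := by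
            simpa using ((hasDerivAt_id t).sub_const η₀).const_mul (-k)
          exact h9.exp
        have hcomp : Real.log (Z T) + B3 * Real.exp (-k * (T - η₀)) ≤
            Real.log (Z η₀) + B3 * Real.exp (-k * (η₀ - η₀)) + 0 * (T - η₀) :=
          decay_bound _ _ hdW hT (fun s hs => by
            have h10 := hXexp s hs.1
            have h11 : (σ - 2) * X s ≤ B3 * k * Real.exp (-k * (s - η₀)) := by
              rw [hB3k]
              calc (σ - 2) * X s
                  ≤ (σ - 2) * ((σ - 2) / 16 * Real.exp (-k * (s - η₀))) :=
                mul_le_mul_of_nonneg_left h10 hσ2'.le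
                _ = (σ - 2) * ((σ - 2) / 16) * Real.exp (-k * (s - η₀)) := by ring
            have h12 : B3 * (Real.exp (-k * (s - η₀)) * -k) =
                -(B3 * k * Real.exp (-k * (s - η₀))) := by ring
            linarith [h11, h12])
        have h12 : Real.exp (-k * (η₀ - η₀)) = 1 := by
          rw [show -k * (η₀ - η₀) = 0 by ring, Real.exp_zero]
        have h13 : 0 ≤ B3 * Real.exp (-k * (T - η₀)) :=
          mul_nonneg hB3nn (Real.exp_pos _).le
        rw [h12] at hcomp
        linarith [hcomp]
      have hB3le : B3 ≤ 1 := by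
        rw [hB3def, div_le_one hkpos, hkdef]
        exact num_B3 hm1 hm2 hσ2 he_pos he4 hσe
      -- conclude the bound on z₀
      have hexp2 : Real.exp 2 ≤ 9 := exp_two_le_nine
      have hZT : ∀ T, η₀ ≤ T → Z T ≤ 2 * e * c * 9 := by
        intro T hT
        have h14 : Real.log (Z T) ≤ Real.log (2 * e * c) + 2 := by
          have := hW T hT
          linarith [hZη₀, hB3le]
        have h15 := Real.exp_le_exp.2 h14
        rw [Real.exp_log (hZpos T), Real.exp_add, Real.exp_log h2ec] at h15
        calc Z T ≤ 2 * e * c * Real.exp 2 := h15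
          _ ≤ 2 * e * c * 9 := mul_le_mul_of_nonneg_left hexp2 h2ec.le
      have h16 : z₀ ≤ 2 * e * c * 9 :=
        le_of_tendsto hZtop ((eventually_ge_atTop η₀).mono fun T hT => hZT T hT)
      linarith [h16]
  -- FINAL arithmetic: from z₀ = -l² - c l, -c/2 ≤ l < 0 and z₀ ≤ 18 e c
  have h36 : -l ≤ 36 * e := by
    by_contra h'
    push_neg at h'
    have hp1 : 0 ≤ (-l) * (l + c / 2) := mul_nonneg (by linarith) (by linarith)
    have hp2 : 0 < (-l - 36 * e) * c := mul_pos (by linarith) hcpos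
    exact num_final hz₀def hzmain hp1 hp2
  linarith [he37, hε, h36]
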